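/- Let G be a group and let g₁, ..., g_k ∈ G be elements that generate G. For each subset S ⊆ {1,...,k} let g_S = ∏_{i ∈ S} g_i, the product taken in increasing order of indices, and let A be the multiset { g_S : S ⊆ {1,...,k} } of size 2^k. Then for every proper subgroup H of G, the number of subsets S ⊆ {1,...,k} with g_S ∈ H is at most 2^(k-1); in other words, A has detection probability at least 1/2 in G. -/

import Mathlib

open scoped Classical

private lemma key_lemma {G : Type*} [Group G] {k : ℕ} (g : Fin k → G) (H : Subgroup G)
    (j : Fin k) (S : Finset (Fin k)) (hj : j ∉ S)
    (hgt : ∀ i ∈ S, j < i → g i ∈ H)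
    (h1 : ((S.sort (· ≤ ·)).map g).prod ∈ H)
    (h2 : (((insert j S).sort (· ≤ ·)).map g).prod ∈ H) : g j ∈ H := by
  classical
  set A := S.filter (fun i => i < j) with hA
  set B := S.filter (fun i => ¬ i < j) with hB
  have hAj : ∀ a ∈ A, a < j := fun a ha => (Finset.mem_filter.1 ha).2
  have hjB : ∀ b ∈ B, j < b := by
    intro b hb
    rcases Finset.mem_filter.1 hb with ⟨hbS, hb2⟩
    rcases lt_or_eq_of_le (not_lt.1 hb2) with h | h
    · exact h
    · exact absurd (h ▸ hbS) hj
  have hvalS : A.val + B.val = S.val := by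
    simp only [hA, hB, Finset.filter_val]
    exact Multiset.filter_add_not _ _
  have hsortS : S.sort (· ≤ ·) = A.sort (· ≤ ·) ++ B.sort (· ≤ ·) := by
    refine (fun hp h2 => List.Perm.eq_of_pairwise' (Finset.pairwise_sort _ _) h2 hp) ?_ ?_
    · rw [← Multiset.coe_eq_coe, ← Multiset.coe_add,
        Finset.sort_eq, Finset.sort_eq, Finset.sort_eq, hvalS]
    · refine List.pairwise_append.2 ⟨Finset.pairwise_sort _ _, Finset.pairwise_sort _ _, ?_⟩
      intro a ha b hb
      exact le_of_lt (lt_trans (hAj a ((Finset.mem_sort _).1 ha))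
        (hjB b ((Finset.mem_sort _).1 hb)))
  have hsortI : (insert j S).sort (· ≤ ·) = A.sort (· ≤ ·) ++ j :: B.sort (· ≤ ·) := by
    refine (fun hp h2 => List.Perm.eq_of_pairwise' (Finset.pairwise_sort _ _) h2 hp) ?_ ?_
    · rw [← Multiset.coe_eq_coe, ← Multiset.coe_add, Finset.sort_eq,
        ← Multiset.cons_coe, Finset.sort_eq, Finset.sort_eq,
        Finset.insert_val_of_notMem hj, ← hvalS,
        ← Multiset.singleton_add, ← Multiset.singleton_add]
      abel
    · refine List.pairwise_append.2 ⟨Finset.pairwise_sort _ _, ?_, ?_⟩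
      · exact List.pairwise_cons.2 ⟨fun b hb => le_of_lt (hjB b ((Finset.mem_sort _).1 hb)),
          Finset.pairwise_sort _ _⟩
      · intro a ha b hb
        have haj : a < j := hAj a ((Finset.mem_sort _).1 ha)
        rcases List.mem_cons.1 hb with rfl | hb
        · exact le_of_lt haj
        · exact le_of_lt (lt_trans haj (hjB b ((Finset.mem_sort _).1 hb)))
  set P := ((A.sort (· ≤ ·)).map g).prod with hP
  set Q := ((B.sort (· ≤ ·)).map g).prod with hQ
  have hQH : Q ∈ H := by
    apply H.list_prod_mem
    intro x hx
    rcases List.mem_map.1 hx with ⟨i, hi, rfl⟩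
    have hiB := (Finset.mem_sort _).1 hi
    exact hgt i (Finset.mem_filter.1 hiB).1 (hjB i hiB)
  have h1' : P * Q ∈ H := by
    rw [hsortS, List.map_append, List.prod_append] at h1
    exact h1
  have hPH : P ∈ H := (mul_mem_cancel_right hQH).1 h1'
  have h2' : P * (g j * Q) ∈ H := by
    rw [hsortI, List.map_append, List.prod_append, List.map_cons, List.prod_cons] at h2
    exact h2
  exact (mul_mem_cancel_right hQH).1 ((mul_mem_cancel_left hPH).1 h2')

theorem stmt1 {G : Type*} [Group G] (k : ℕ) (hk : 0 < k) (g : Fin k → G)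
    (hgen : Subgroup.closure (Set.range g) = ⊤)
    (H : Subgroup G) (hH : H ≠ ⊤) :
    (Finset.univ.filter fun S : Finset (Fin k) =>
        ((S.sort (· ≤ ·)).map g).prod ∈ H).card ≤ 2 ^ (k - 1) := by
  classical
  have hex : (Finset.univ.filter fun i => g i ∉ H).Nonempty := by
    rw [Finset.filter_nonempty_iff]
    by_contra h
    push_neg at h
    apply hH
    rw [← top_le_iff, ← hgen]
    refine (Subgroup.closure_le H).2 ?_
    rintro _ ⟨i, rfl⟩
    exact h i (Finset.mem_univ i)
  set j := (Finset.univ.filter fun i => g i ∉ H).max' hex with hjdef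
  have hjH : g j ∉ H :=
    (Finset.mem_filter.1 ((Finset.univ.filter fun i => g i ∉ H).max'_mem hex)).2
  have hmax : ∀ i : Fin k, j < i → g i ∈ H := by
    intro i hi
    by_contra hiH
    exact absurd (Finset.le_max' _ i (Finset.mem_filter.2 ⟨Finset.mem_univ i, hiH⟩))
      (not_le.2 hi)
  have hcard : ((Finset.univ.erase j).powerset).card = 2 ^ (k - 1) := by
    rw [Finset.card_powerset, Finset.card_erase_of_mem (Finset.mem_univ j),
      Finset.card_univ, Fintype.card_fin]
  rw [← hcard]
  apply Finset.card_le_card_of_injOn (fun S => S.erase j)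
  · intro S _
    exact Finset.mem_powerset.2 (Finset.erase_subset_erase j (Finset.subset_univ S))
  · intro S₁ h₁ S₂ h₂ heq
    simp only [Finset.coe_filter, Set.mem_setOf_eq] at h₁ h₂
    simp only at heq
    by_cases hj1 : j ∈ S₁ <;> by_cases hj2 : j ∈ S₂
    · rw [← Finset.insert_erase hj1, heq, Finset.insert_erase hj2]
    · exfalso
      apply hjH
      have hS2 : S₂ = S₁.erase j := by
        rw [heq]; exact (Finset.erase_eq_of_notMem hj2).symm
      have hS1 : S₁ = insert j (S₁.erase j) := (Finset.insert_erase hj1).symm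
      refine key_lemma g H j (S₁.erase j) (Finset.notMem_erase j S₁)
        (fun i hi hji => hmax i hji) ?_ ?_
      · rw [← hS2]; exact h₂.2
      · rw [← hS1]; exact h₁.2
    · exfalso
      apply hjH
      have hS1 : S₁ = S₂.erase j := by
        rw [← heq]; exact (Finset.erase_eq_of_notMem hj1).symm
      have hS2 : S₂ = insert j (S₂.erase j) := (Finset.insert_erase hj2).symm
      refine key_lemma g H j (S₂.erase j) (Finset.notMem_erase j S₂)
        (fun i hi hji => hmax i hji) ?_ ?_
      · rw [← hS1]; exact h₁.2
      · rw [← hS2]; exact h₂.2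
    · rw [← Finset.erase_eq_of_notMem hj1, heq, Finset.erase_eq_of_notMem hj2]
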